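/- Every strictly increasing function f ⊆ [0,1]² (i.e., a partial function whose graph satisfies: x₁ < x₂ implies f(x₁) < f(x₂)) is contained in a strictly increasing function with Borel graph (equivalently, extends to a strictly increasing Borel-measurable function defined on a Borel subset of [0,1]). -/

import Mathlib

/-- A subset of `[0,1]²` is a function: equal first coordinates give equal second ones. -/
def IsFunctionGraph (f : Set (Set.Icc (0:ℝ) 1 × Set.Icc (0:ℝ) 1)) : Prop :=
  ∀ p ∈ f, ∀ q ∈ f, p.1 = q.1 → p.2 = q.2

/-- A subset of `[0,1]²` is strictly increasing. -/
def IsStrictlyIncreasingGraph (f : Set (Set.Icc (0:ℝ) 1 × Set.Icc (0:ℝ) 1)) : Prop :=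
  ∀ p ∈ f, ∀ q ∈ f, p.1 < q.1 → p.2 < q.2

lemma aux_V {F : ℝ → ℝ} {C : Set ℝ} (hF : MonotoneOn F C) :
    ∃ V : Set ℝ, V.Countable ∧ ∀ s ∈ C, (F s ∈ V ↔ ∃ t ∈ C, t ≠ s ∧ F t = F s) := by
  classical
  set V : Set ℝ := {c | ∃ t1 ∈ C, ∃ t2 ∈ C, t1 < t2 ∧ F t1 = c ∧ F t2 = c} with hVdef
  have hmem : ∀ c : V, ∃ t1 ∈ C, ∃ t2 ∈ C, t1 < t2 ∧ F t1 = (c:ℝ) ∧ F t2 = (c:ℝ) :=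
    fun c => c.2
  choose t1 ht1C t2 ht2C hlt h1 h2 using hmem
  choose q hq1 hq2 using fun c : V => exists_rat_btwn (K := ℝ) (hlt c)
  have hmono : ∀ c c' : V, (c:ℝ) < (c':ℝ) → (q c : ℝ) < (q c' : ℝ) := by
    intro c c' hcc
    rcases le_or_gt (t1 c') (t2 c) with h | h
    · have := hF (ht1C c') (ht2C c) h
      rw [h1 c', h2 c] at this; linarith
    · have := hq2 c; have := hq1 c'; linarith
  have hinj : Function.Injective q := by
    intro c c' hqq
    rcases lt_trichotomy (c:ℝ) (c':ℝ) with h | h | h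
    · exact absurd (hmono c c' h) (by rw [hqq]; exact lt_irrefl _)
    · exact Subtype.ext h
    · exact absurd (hmono c' c h) (by rw [hqq]; exact lt_irrefl _)
  refine ⟨V, ?_, ?_⟩
  · exact Set.countable_coe_iff.mp hinj.countable
  · intro s hs
    constructor
    · rintro ⟨t1', ht1', t2', ht2', hlt', he1, he2⟩
      rcases eq_or_ne t1' s with rfl | h
      · exact ⟨t2', ht2', (ne_of_gt hlt'), he2⟩
      · exact ⟨t1', ht1', h, he1⟩
    · rintro ⟨t, htC, hts, hFt⟩
      rcases lt_or_gt_of_ne hts with h | h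
      · exact ⟨t, htC, s, hs, h, hFt, rfl⟩
      · exact ⟨s, hs, t, htC, h, rfl, hFt⟩

lemma aux_countA {F : ℝ → ℝ} {A V : Set ℝ} (hV : V.Countable) (hs : StrictMonoOn F A) :
    (A ∩ F ⁻¹' V).Countable := by
  have : Countable V := hV.to_subtype
  refine Set.countable_coe_iff.mp (Function.Injective.countable
    (f := fun x : ↥(A ∩ F ⁻¹' V) => (⟨F x, x.2.2⟩ : V)) ?_)
  intro x y hxy
  have : F (x:ℝ) = F (y:ℝ) := congrArg Subtype.val hxy
  exact Subtype.ext (hs.injOn x.2.1 y.2.1 this)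

/-- Every strictly increasing function `f ⊆ [0,1]²` is contained in a
strictly increasing function with Borel graph. -/
theorem strictly_increasing_extends_to_borel
    (f : Set (Set.Icc (0:ℝ) 1 × Set.Icc (0:ℝ) 1))
    (hfun : IsFunctionGraph f) (hinc : IsStrictlyIncreasingGraph f) :
    ∃ g : Set (Set.Icc (0:ℝ) 1 × Set.Icc (0:ℝ) 1),
      f ⊆ g ∧ MeasurableSet g ∧ IsFunctionGraph g ∧ IsStrictlyIncreasingGraph g := by
  classical
  set σ : Set.Icc (0:ℝ) 1 × Set.Icc (0:ℝ) 1 → ℝ := fun p => (p.1 : ℝ) + (p.2 : ℝ) with hσdef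
  -- key componentwise order lemma
  have lemKey : ∀ p ∈ f, ∀ q ∈ f, σ p ≤ σ q → (p.1 : ℝ) ≤ (q.1 : ℝ) ∧ (p.2 : ℝ) ≤ (q.2 : ℝ) := by
    intro p hp q hq hle
    rcases lt_trichotomy p.1 q.1 with h | h | h
    · have h2 := hinc p hp q hq h
      exact ⟨le_of_lt h, le_of_lt h2⟩
    · have h2 := hfun p hp q hq h
      exact ⟨le_of_eq (congrArg _ h), le_of_eq (congrArg _ h2)⟩
    · have h2 := hinc q hq p hp h
      have : σ q < σ p := add_lt_add h h2
      linarith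
  have hσinj : ∀ p ∈ f, ∀ q ∈ f, σ p = σ q → p = q := by
    intro p hp q hq h
    obtain ⟨a1, a2⟩ := lemKey p hp q hq (le_of_eq h)
    obtain ⟨b1, b2⟩ := lemKey q hq p hp (le_of_eq h.symm)
    exact Prod.ext (Subtype.ext (le_antisymm a1 b1)) (Subtype.ext (le_antisymm a2 b2))
  set A : Set ℝ := σ '' f with hAdef
  -- partial coordinate functions on A
  set X : ℝ → ℝ := fun s => sSup ((fun p => (p.1 : ℝ)) '' {p ∈ f | σ p = s}) with hXdef
  set Y : ℝ → ℝ := fun s => sSup ((fun p => (p.2 : ℝ)) '' {p ∈ f | σ p = s}) with hYdef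
  have hXA : ∀ p ∈ f, X (σ p) = (p.1 : ℝ) := by
    intro p hp
    have : ((fun p => (p.1 : ℝ)) '' {q ∈ f | σ q = σ p}) = {(p.1 : ℝ)} := by
      ext x
      constructor
      · rintro ⟨q, ⟨hq, hqs⟩, rfl⟩
        simp [hσinj q hq p hp hqs]
      · rintro rfl; exact ⟨p, ⟨hp, rfl⟩, rfl⟩
    rw [hXdef]; simp only [this, csSup_singleton]
  have hYA : ∀ p ∈ f, Y (σ p) = (p.2 : ℝ) := by
    intro p hp
    have : ((fun p => (p.2 : ℝ)) '' {q ∈ f | σ q = σ p}) = {(p.2 : ℝ)} := by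
      ext x
      constructor
      · rintro ⟨q, ⟨hq, hqs⟩, rfl⟩
        simp [hσinj q hq p hp hqs]
      · rintro rfl; exact ⟨p, ⟨hp, rfl⟩, rfl⟩
    rw [hYdef]; simp only [this, csSup_singleton]
  have hXlip : LipschitzOnWith 1 X A := by
    rw [lipschitzOnWith_iff_dist_le_mul]
    rintro s ⟨p, hp, rfl⟩ t ⟨q, hq, rfl⟩
    rw [hXA p hp, hXA q hq, Real.dist_eq, Real.dist_eq, NNReal.coe_one, one_mul]
    rcases le_total (σ p) (σ q) with h | h
    · obtain ⟨a1, a2⟩ := lemKey p hp q hq h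
      rw [hσdef] at h ⊢
      rw [abs_sub_comm ((p.1:ℝ)) _, abs_of_nonneg (by linarith), abs_sub_comm]
      rw [abs_of_nonneg (by simpa using h)]
      simp only; linarith
    · obtain ⟨a1, a2⟩ := lemKey q hq p hp h
      rw [hσdef] at h ⊢
      rw [abs_of_nonneg (by linarith), abs_of_nonneg (by simpa using h)]
      simp only; linarith
  have hYlip : LipschitzOnWith 1 Y A := by
    rw [lipschitzOnWith_iff_dist_le_mul]
    rintro s ⟨p, hp, rfl⟩ t ⟨q, hq, rfl⟩
    rw [hYA p hp, hYA q hq, Real.dist_eq, Real.dist_eq, NNReal.coe_one, one_mul]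
    rcases le_total (σ p) (σ q) with h | h
    · obtain ⟨a1, a2⟩ := lemKey p hp q hq h
      rw [hσdef] at h ⊢
      rw [abs_sub_comm ((p.2:ℝ)) _, abs_of_nonneg (by linarith), abs_sub_comm]
      rw [abs_of_nonneg (by simpa using h)]
      simp only; linarith
    · obtain ⟨a1, a2⟩ := lemKey q hq p hp h
      rw [hσdef] at h ⊢
      rw [abs_of_nonneg (by linarith), abs_of_nonneg (by simpa using h)]
      simp only; linarith
  obtain ⟨Φ, hΦl, hΦe⟩ := hXlip.extend_real
  obtain ⟨Ψ, hΨl, hΨe⟩ := hYlip.extend_real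
  have hΦA : ∀ p ∈ f, Φ (σ p) = (p.1 : ℝ) := by
    intro p hp
    rw [← hΦe ⟨p, hp, rfl⟩]; exact hXA p hp
  have hΨA : ∀ p ∈ f, Ψ (σ p) = (p.2 : ℝ) := by
    intro p hp
    rw [← hΨe ⟨p, hp, rfl⟩]; exact hYA p hp
  set C : Set ℝ := closure A with hCdef
  have hAC : A ⊆ C := subset_closure
  have hsum : ∀ s ∈ C, Φ s + Ψ s = s := by
    have : Set.EqOn (fun s => Φ s + Ψ s) id C := by
      apply Set.EqOn.closure (s := A) _ (hΦl.continuous.add hΨl.continuous) continuous_id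
      rintro s ⟨p, hp, rfl⟩
      simp only [id, Pi.add_apply, hΦA p hp, hΨA p hp]; rfl
    intro s hs; exact this hs
  have hΦmono : MonotoneOn Φ C := by
    intro s hs t ht hst
    have h1 := hsum s hs
    have h2 := hsum t ht
    have h3 := hΨl.dist_le_mul t s
    rw [Real.dist_eq, Real.dist_eq, NNReal.coe_one, one_mul,
      abs_of_nonneg (sub_nonneg.mpr hst)] at h3
    have h5 := (abs_le.mp h3).2
    linarith
  have hΨmono : MonotoneOn Ψ C := by
    intro s hs t ht hst
    have h1 := hsum s hs
    have h2 := hsum t ht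
    have h3 := hΦl.dist_le_mul t s
    rw [Real.dist_eq, Real.dist_eq, NNReal.coe_one, one_mul,
      abs_of_nonneg (sub_nonneg.mpr hst)] at h3
    have h5 := (abs_le.mp h3).2
    linarith
  have hΦstrict : StrictMonoOn Φ A := by
    rintro s ⟨p, hp, rfl⟩ t ⟨q, hq, rfl⟩ hst
    rw [hΦA p hp, hΦA q hq]
    obtain ⟨a1, a2⟩ := lemKey p hp q hq (le_of_lt hst)
    rcases lt_or_eq_of_le a1 with h | h
    · exact h
    · exfalso
      have : p.2 = q.2 := hfun p hp q hq (Subtype.ext h)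
      have : σ p = σ q := by rw [hσdef]; simp only [h, this]
      exact absurd this (ne_of_lt hst)
  have hΨstrict : StrictMonoOn Ψ A := by
    rintro s ⟨p, hp, rfl⟩ t ⟨q, hq, rfl⟩ hst
    rw [hΨA p hp, hΨA q hq]
    obtain ⟨a1, a2⟩ := lemKey p hp q hq (le_of_lt hst)
    rcases lt_or_eq_of_le a2 with h | h
    · exact h
    · exfalso
      have h1 : p.1 = q.1 := by
        have hp2 : p.2 = q.2 := Subtype.ext h
        by_contra hne
        rcases lt_or_gt_of_ne hne with hlt | hlt
        · exact absurd (hinc p hp q hq hlt) (by rw [hp2]; exact lt_irrefl _)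
        · exact absurd (hinc q hq p hp hlt) (by rw [hp2]; exact lt_irrefl _)
      have : σ p = σ q := by rw [hσdef]; simp only [h, congrArg Subtype.val h1]
      exact absurd this (ne_of_lt hst)
  obtain ⟨VΦ, hVΦc, hVΦ⟩ := aux_V hΦmono
  obtain ⟨VΨ, hVΨc, hVΨ⟩ := aux_V hΨmono
  set B : Set ℝ := Φ ⁻¹' VΦ ∪ Ψ ⁻¹' VΨ with hBdef
  set I : Set ℝ := C \ B with hIdef
  have hIC : I ⊆ C := Set.diff_subset
  have hkey : ∀ s t : ℝ, (s ∈ I ∨ s ∈ A) → (t ∈ I ∨ t ∈ A) → s < t →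
      Φ s < Φ t ∧ Ψ s < Ψ t := by
    intro s t hs ht hst
    have hsC : s ∈ C := hs.elim (fun h => hIC h) (fun h => hAC h)
    have htC : t ∈ C := ht.elim (fun h => hIC h) (fun h => hAC h)
    constructor
    · rcases lt_or_eq_of_le (hΦmono hsC htC (le_of_lt hst)) with h | h
      · exact h
      · exfalso
        have hsV : Φ s ∈ VΦ := (hVΦ s hsC).mpr ⟨t, htC, (ne_of_gt hst), h.symm⟩
        have htV : Φ t ∈ VΦ := (hVΦ t htC).mpr ⟨s, hsC, (ne_of_lt hst), h⟩
        have hsA : s ∈ A := hs.resolve_left (fun hI => hI.2 (Set.mem_union_left _ hsV))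
        have htA : t ∈ A := ht.resolve_left (fun hI => hI.2 (Set.mem_union_left _ htV))
        exact (ne_of_lt (hΦstrict hsA htA hst)) h
    · rcases lt_or_eq_of_le (hΨmono hsC htC (le_of_lt hst)) with h | h
      · exact h
      · exfalso
        have hsV : Ψ s ∈ VΨ := (hVΨ s hsC).mpr ⟨t, htC, (ne_of_gt hst), h.symm⟩
        have htV : Ψ t ∈ VΨ := (hVΨ t htC).mpr ⟨s, hsC, (ne_of_lt hst), h⟩
        have hsA : s ∈ A := hs.resolve_left (fun hI => hI.2 (Set.mem_union_right _ hsV))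
        have htA : t ∈ A := ht.resolve_left (fun hI => hI.2 (Set.mem_union_right _ htV))
        exact (ne_of_lt (hΨstrict hsA htA hst)) h
  have hbadA : (A ∩ B).Countable := by
    rw [hBdef, Set.inter_union_distrib_left]
    exact (aux_countA hVΦc hΦstrict).union (aux_countA hVΨc hΨstrict)
  set fbad : Set (Set.Icc (0:ℝ) 1 × Set.Icc (0:ℝ) 1) := {p ∈ f | σ p ∈ B} with hfbaddef
  have hfbadc : fbad.Countable := by
    have : Countable ↥(A ∩ B) := hbadA.to_subtype
    refine Set.countable_coe_iff.mp (Function.Injective.countable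
      (f := fun p : ↥fbad => (⟨σ (p : _), ⟨⟨(p : _), p.2.1, rfl⟩, p.2.2⟩⟩ : ↥(A ∩ B))) ?_)
    intro p q hpq
    have : σ (p : _) = σ (q : _) := congrArg Subtype.val hpq
    exact Subtype.ext (hσinj _ p.2.1 _ q.2.1 this)
  have hImeas : MeasurableSet I :=
    MeasurableSet.diff isClosed_closure.measurableSet
      ((hΦl.continuous.measurable hVΦc.measurableSet).union
        (hΨl.continuous.measurable hVΨc.measurableSet))
  set ρ : ℝ → ℝ × ℝ := fun s => (Φ s, Ψ s) with hρdef
  have hρinj : Set.InjOn ρ I := by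
    intro s hsI t htI h
    by_contra hne
    rcases lt_or_gt_of_ne hne with hlt | hlt
    · exact (ne_of_lt (hkey s t (Or.inl hsI) (Or.inl htI) hlt).1) (congrArg Prod.fst h)
    · exact (ne_of_lt (hkey t s (Or.inl htI) (Or.inl hsI) hlt).1) (congrArg Prod.fst h).symm
  have hρmeas : MeasurableSet (ρ '' I) :=
    hImeas.image_of_continuousOn_injOn
      ((hΦl.continuous.prodMk hΨl.continuous).continuousOn) hρinj
  set e : Set.Icc (0:ℝ) 1 × Set.Icc (0:ℝ) 1 → ℝ × ℝ :=
    fun p => ((p.1 : ℝ), (p.2 : ℝ)) with hedef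
  have hemeas : Measurable e :=
    (measurable_subtype_coe.comp measurable_fst).prodMk
      (measurable_subtype_coe.comp measurable_snd)
  set gset : Set (Set.Icc (0:ℝ) 1 × Set.Icc (0:ℝ) 1) := e ⁻¹' (ρ '' I) ∪ fbad with hgdef
  have hparam : ∀ p ∈ gset, ∃ s : ℝ,
      (s ∈ I ∨ s ∈ A) ∧ Φ s = (p.1 : ℝ) ∧ Ψ s = (p.2 : ℝ) := by
    rintro p (hp | hp)
    · obtain ⟨s, hsI, hs⟩ := hp
      exact ⟨s, Or.inl hsI, congrArg Prod.fst hs, congrArg Prod.snd hs⟩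
    · exact ⟨σ p, Or.inr ⟨p, hp.1, rfl⟩, hΦA p hp.1, hΨA p hp.1⟩
  refine ⟨gset, ?_, ?_, ?_, ?_⟩
  · intro p hp
    by_cases hB : σ p ∈ B
    · exact Or.inr ⟨hp, hB⟩
    · left
      refine ⟨σ p, ⟨hAC ⟨p, hp, rfl⟩, hB⟩, ?_⟩
      rw [hρdef]; simp only
      rw [hΦA p hp, hΨA p hp]
  · exact (hemeas hρmeas).union hfbadc.measurableSet
  · intro p hp q hq h1
    obtain ⟨s, hsIA, hsΦ, hsΨ⟩ := hparam p hp
    obtain ⟨t, htIA, htΦ, htΨ⟩ := hparam q hq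
    rcases lt_trichotomy s t with h | h | h
    · exfalso
      have h2 := (hkey s t hsIA htIA h).1
      rw [hsΦ, htΦ, congrArg Subtype.val h1] at h2
      exact lt_irrefl _ h2
    · subst h
      exact Subtype.ext (by rw [← hsΨ, ← htΨ])
    · exfalso
      have h2 := (hkey t s htIA hsIA h).1
      rw [hsΦ, htΦ, congrArg Subtype.val h1] at h2
      exact lt_irrefl _ h2
  · intro p hp q hq h1
    obtain ⟨s, hsIA, hsΦ, hsΨ⟩ := hparam p hp
    obtain ⟨t, htIA, htΦ, htΨ⟩ := hparam q hq
    have h1' : (p.1 : ℝ) < (q.1 : ℝ) := h1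
    have hst : s < t := by
      by_contra hle
      push_neg at hle
      rcases lt_or_eq_of_le hle with h | h
      · have h2 := (hkey t s htIA hsIA h).1
        rw [hsΦ, htΦ] at h2; linarith
      · rw [h] at htΦ
        rw [hsΦ] at htΦ; linarith
    have h2 := (hkey s t hsIA htIA hst).2
    rw [hsΨ, htΨ] at h2
    exact Subtype.coe_lt_coe.mp h2
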